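/- For each odd integer n ≥ 5 there exists a finite set S of binary words, each of length at most n, such that S* is co-finite in {0,1}* and the longest word not in S* has length Ω(n² · 2^{n/2}); specifically, taking m = (n+1)/2 the longest omitted word has length m·l − m − l with l = m·2^{n−m} + (n−m). -/

import Mathlib

open Computability

namespace Frob14

/-- binary value of a word, LSB-first -/
def nuf : List (Fin 2) → ℕ := fun w => w.foldr (fun b a => b.val + 2 * a) 0

lemma nuf_cons (b : Fin 2) (w : List (Fin 2)) : nuf (b :: w) = b.val + 2 * nuf w := rfl

lemma nuf_lt (w : List (Fin 2)) : nuf w < 2 ^ w.length := by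
  induction w with
  | nil => simp [nuf]
  | cons b w ih =>
    have hb : b.val < 2 := b.isLt
    rw [nuf_cons, List.length_cons, pow_succ]
    omega

/-- binary encoding, LSB-first -/
def binf : ℕ → ℕ → List (Fin 2)
  | 0, _ => []
  | t+1, v => (⟨v % 2, by omega⟩ : Fin 2) :: binf t (v / 2)

lemma binf_length (t v : ℕ) : (binf t v).length = t := by
  induction t generalizing v with
  | zero => rfl
  | succ t ih => simp [binf, ih]

lemma nuf_binf (t : ℕ) : ∀ v : ℕ, v < 2 ^ t → nuf (binf t v) = v := by
  induction t with
  | zero => intro v hv; interval_cases v; rfl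
  | succ t ih =>
    intro v hv
    have hv2 : v / 2 < 2 ^ t := by rw [pow_succ] at hv; omega
    rw [binf, nuf_cons, ih _ hv2]
    simp only []
    omega

def lf (t : ℕ) : ℕ := (t+1) * 2^t + t
def Nf (t : ℕ) : ℕ := t * lf t - (t+1)

def blkf (t j : ℕ) : List (Fin 2) := binf t j ++ [(0 : Fin 2)]

lemma blkf_length (t j : ℕ) : (blkf t j).length = t + 1 := by
  simp [blkf, binf_length]

def Uf (t : ℕ) : List (Fin 2) := (List.range' 0 (2^t) 1).flatMap (blkf t) ++ binf t 0

lemma flatMap_blkf_length (t : ℕ) : ∀ b a : ℕ,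
    ((List.range' a b 1).flatMap (blkf t)).length = b * (t+1) := by
  intro b
  induction b with
  | zero => intro a; simp
  | succ b ih =>
    intro a
    rw [List.range'_succ, List.flatMap_cons, List.length_append, blkf_length, ih]
    ring

lemma Uf_length (t : ℕ) : (Uf t).length = lf t := by
  rw [Uf, List.length_append, flatMap_blkf_length, binf_length, lf]
  ring


lemma dropUf (t : ℕ) : ∀ j : ℕ, j ≤ 2^t →
    (Uf t).drop (j*(t+1)) =
      (List.range' j (2^t - j) 1).flatMap (blkf t) ++ binf t 0 := by
  intro j
  induction j with
  | zero => intro _; simp [Uf]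
  | succ j ih =>
    intro hj
    have hj' : j ≤ 2^t := by omega
    have e : (j+1)*(t+1) = j*(t+1) + (t+1) := by ring
    rw [e, ← List.drop_drop, ih hj']
    have hsub : 2^t - j = (2^t - (j+1)) + 1 := by omega
    rw [hsub, List.range'_succ, List.flatMap_cons, List.append_assoc,
      List.drop_left' (blkf_length t j)]

lemma winUf (t : ℕ) (j : ℕ) (hj : j < 2^t) :
    ((Uf t).drop (j*(t+1))).take t = binf t j := by
  rw [dropUf t j (le_of_lt hj)]
  have hsub : 2^t - j = (2^t - (j+1)) + 1 := by omega
  rw [hsub, List.range'_succ, List.flatMap_cons, blkf, List.append_assoc, List.append_assoc,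
    List.take_append_of_le_length (by rw [binf_length]),
    List.take_of_length_le (by rw [binf_length])]

def WWf (t : ℕ) : List (Fin 2) := (List.replicate t (Uf t)).flatten

lemma WWf_length (t : ℕ) : (WWf t).length = t * lf t := by
  simp [WWf, List.length_flatten, List.map_replicate, List.sum_replicate, smul_eq_mul, Uf_length]

def Wf (t : ℕ) : List (Fin 2) := (WWf t).take (Nf t)

lemma Wf_length (t : ℕ) : (Wf t).length = Nf t := by
  rw [Wf, List.length_take, WWf_length]
  have : Nf t ≤ t * lf t := Nat.sub_le _ _
  omega

lemma dropWW_aux (t : ℕ) (U : List (Fin 2)) (hU : U.length = lf t) :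
    ∀ k i : ℕ, i ≤ k →
    ((List.replicate k U).flatten).drop (i * lf t) = (List.replicate (k - i) U).flatten := by
  intro k i
  induction i generalizing k with
  | zero => intro _; simp
  | succ i ih =>
    intro hik
    have e : (i+1) * lf t = i * lf t + lf t := by ring
    rw [e, ← List.drop_drop, ih k (by omega)]
    have hsub : k - i = (k - (i+1)) + 1 := by omega
    rw [hsub, List.replicate_succ, List.flatten_cons, List.drop_left' hU]

lemma winWf (t : ℕ) (i j : ℕ) (hi : i < t) (hj : j < 2^t)
    (hbound : i * lf t + j * (t+1) + t ≤ Nf t) :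
    ((Wf t).drop (i * lf t + j * (t+1))).take t = binf t j := by
  set q := i * lf t + j * (t+1) with hq
  rw [Wf, List.drop_take, List.take_take]
  have hmin : t ⊓ (Nf t - q) = t := min_eq_left (by omega)
  rw [hmin, hq, ← List.drop_drop, WWf, dropWW_aux t (Uf t) (Uf_length t) t i (le_of_lt hi)]
  have hsub : t - i = (t - (i+1)) + 1 := by omega
  rw [hsub, List.replicate_succ, List.flatten_cons]
  have hjlen : j * (t+1) + t ≤ (Uf t).length := by
    rw [Uf_length]
    have : (j+1) * (t+1) ≤ 2^t * (t+1) := Nat.mul_le_mul_right _ (by omega)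
    have e2 : (j+1)*(t+1) = j*(t+1) + (t+1) := by ring
    have e3 : lf t = 2^t * (t+1) + t := by rw [lf]; ring
    omega
  rw [List.drop_append_of_le_length (by omega),
    List.take_append_of_le_length (by rw [List.length_drop]; omega),
    winUf t j hj]

def Bf (t : ℕ) : Language (Fin 2) :=
  {w | w.length = 2*t+1 ∧ nuf (w.drop (t+1)) ≠ nuf (w.take t) + 1}

def Sf (t : ℕ) : Language (Fin 2) := {w | w.length = t+1 ∨ w ∈ Bf t}

lemma design (t i j : ℕ) (hi : i < t) (hj : j + 1 < 2^t)
    (hbound : i * lf t + j * (t+1) + (2*t+1) ≤ Nf t) :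
    ((Wf t).drop (i * lf t + j * (t+1))).take (2*t+1) ∉ Bf t := by
  set q := i * lf t + j * (t+1) with hq
  intro hmem
  obtain ⟨hlen, hne⟩ := hmem
  apply hne
  have h1 : (((Wf t).drop q).take (2*t+1)).take t = binf t j := by
    rw [List.take_take, min_eq_left (by omega)]
    exact winWf t i j hi (by omega) (by omega)
  have h2 : (((Wf t).drop q).take (2*t+1)).drop (t+1) = binf t (j+1) := by
    rw [List.drop_take, List.drop_drop]
    have e : 2*t+1 - (t+1) = t := by omega
    have e2 : q + (t+1) = i * lf t + (j+1) * (t+1) := by rw [hq]; ring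
    rw [e, e2]
    exact winWf t i (j+1) hi hj (by
      have e3 : i * lf t + (j+1) * (t+1) + t = q + (2*t+1) := by rw [hq]; ring
      omega)
  rw [h1, h2, nuf_binf t j (by omega), nuf_binf t (j+1) hj]


lemma star_append (t : ℕ) {x y : List (Fin 2)} (hx : x ∈ (Sf t)∗) (hy : y ∈ (Sf t)∗) :
    x ++ y ∈ (Sf t)∗ := by
  rw [Language.mem_kstar] at hx hy ⊢
  obtain ⟨L1, rfl, h1⟩ := hx
  obtain ⟨L2, rfl, h2⟩ := hy
  exact ⟨L1 ++ L2, by rw [List.flatten_append], by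
    intro y hy; rcases List.mem_append.mp hy with h | h
    · exact h1 y h
    · exact h2 y h⟩

lemma cons_star (t : ℕ) {x y : List (Fin 2)} (hx : x ∈ Sf t) (hy : y ∈ (Sf t)∗) :
    x ++ y ∈ (Sf t)∗ := by
  rw [Language.mem_kstar] at hy ⊢
  obtain ⟨L, rfl, hL⟩ := hy
  exact ⟨x :: L, rfl, by
    intro z hz; rcases List.mem_cons.mp hz with h | h
    · exact h ▸ hx
    · exact hL z h⟩

lemma chunk (t : ℕ) : ∀ c : ℕ, ∀ w : List (Fin 2), w.length = c * (t+1) → w ∈ (Sf t)∗ := by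
  intro c
  induction c with
  | zero =>
    intro w hw
    rw [List.length_eq_zero_iff.mp (by omega : w.length = 0)]
    exact Language.nil_mem_kstar _
  | succ c ih =>
    intro w hw
    have e : (c+1)*(t+1) = c*(t+1) + (t+1) := by ring
    rw [← List.take_append_drop (t+1) w]
    apply cons_star
    · exact Or.inl (by rw [List.length_take]; omega)
    · exact ih _ (by rw [List.length_drop]; omega)

lemma findB (t : ℕ) (w : List (Fin 2)) (hw : lf t ≤ w.length) :
    ∃ j, j < 2^t ∧ ((w.drop (j*(t+1))).take (2*t+1)) ∈ Bf t := by
  by_contra h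
  push_neg at h
  have hC : 2^t * (t+1) + t = lf t := by rw [lf]; ring
  have aux : ∀ j : ℕ, j ≤ 2^t → j ≤ nuf ((w.drop (j*(t+1))).take t) := by
    intro j
    induction j with
    | zero => intro _; exact Nat.zero_le _
    | succ j ih =>
      intro hj
      have hj' : j < 2^t := by omega
      have hroom : j*(t+1) + (2*t+1) ≤ lf t := by
        have : (j+1) * (t+1) ≤ 2^t * (t+1) := Nat.mul_le_mul_right _ (by omega)
        have e2 : (j+1)*(t+1) = j*(t+1) + (t+1) := by ring
        omega
      have hnot := h j hj'
      set x := (w.drop (j*(t+1))).take (2*t+1) with hx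
      have hxlen : x.length = 2*t+1 := by
        rw [hx, List.length_take, List.length_drop]
        omega
      have heq : nuf (x.drop (t+1)) = nuf (x.take t) + 1 := by
        by_contra hne
        exact hnot ⟨hxlen, hne⟩
      have h1 : x.take t = (w.drop (j*(t+1))).take t := by
        rw [hx, List.take_take, min_eq_left (by omega)]
      have h2 : x.drop (t+1) = (w.drop ((j+1)*(t+1))).take t := by
        rw [hx, List.drop_take, List.drop_drop]
        have e : 2*t+1 - (t+1) = t := by omega
        have e2 : j*(t+1) + (t+1) = (j+1)*(t+1) := by ring
        rw [e, e2]
      have := ih (by omega)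
      rw [h1] at heq
      rw [h2] at heq
      omega
  have hK := aux (2^t) (le_refl _)
  have hlen : ((w.drop (2^t*(t+1))).take t).length = t := by
    rw [List.length_take, List.length_drop]
    omega
  have := nuf_lt ((w.drop (2^t*(t+1))).take t)
  rw [hlen] at this
  omega

lemma star_long (t : ℕ) : ∀ r : ℕ, r ≤ t → ∀ w : List (Fin 2),
    (∃ c, w.length + r = c * (t+1)) → r * lf t ≤ w.length → w ∈ (Sf t)∗ := by
  intro r
  induction r with
  | zero =>
    intro _ w ⟨c, hc⟩ _
    exact chunk t c w (by omega)
  | succ r ih =>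
    intro hr w ⟨c, hc⟩ hlong
    have hlf : lf t ≤ w.length := by
      have : 1 * lf t ≤ (r+1) * lf t := Nat.mul_le_mul_right _ (by omega)
      omega
    obtain ⟨j, hj, hB⟩ := findB t w hlf
    set q := j * (t+1) with hq
    have hC : 2^t * (t+1) + t = lf t := by rw [lf]; ring
    have hqle : q + (2*t+1) ≤ lf t := by
      have : (j+1) * (t+1) ≤ 2^t * (t+1) := Nat.mul_le_mul_right _ (by omega)
      have e2 : (j+1)*(t+1) = j*(t+1) + (t+1) := by ring
      omega
    have hsplit : w = w.take q ++ ((w.drop q).take (2*t+1) ++ w.drop (q + (2*t+1))) := by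
      rw [List.drop_take_append_drop, List.take_append_drop]
    rw [hsplit]
    apply star_append
    · exact chunk t j _ (by rw [List.length_take]; omega)
    · apply cons_star
      · exact Or.inr hB
      · apply ih (by omega)
        · refine ⟨c - j - 2, ?_⟩
          have hcge : j + 2 ≤ c := by
            by_contra hcl
            push_neg at hcl
            have : c * (t+1) ≤ (j+1) * (t+1) := Nat.mul_le_mul_right _ (by omega)
            have e2 : (j+1)*(t+1) = j*(t+1) + (t+1) := by ring
            omega
          have e3 : (c - j - 2) * (t+1) = c * (t+1) - j*(t+1) - 2*(t+1) := by
            rw [Nat.sub_mul, Nat.sub_mul]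
          rw [List.length_drop, e3]
          omega
        · rw [List.length_drop]
          have e4 : (r+1) * lf t = r * lf t + lf t := by ring
          omega

lemma upper (t : ℕ) (ht : 2 ≤ t) (w : List (Fin 2)) (hw : Nf t < w.length) :
    w ∈ (Sf t)∗ := by
  have hNf : Nf t + (t+1) = t * lf t := by
    have h1 : t + 1 ≤ t * lf t := by
      have : t * (t+1) ≤ t * lf t := Nat.mul_le_mul_left _ (by rw [lf]; nlinarith [Nat.one_le_two_pow (n := t)])
      nlinarith
    rw [Nf]
    omega
  obtain ⟨c, s, hs, hdecomp⟩ : ∃ c s, s < t + 1 ∧ w.length = c * (t+1) + s :=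
    ⟨w.length / (t+1), w.length % (t+1), Nat.mod_lt _ (by omega), by
      rw [Nat.mul_comm]; exact (Nat.div_add_mod _ _).symm⟩
  rcases Nat.eq_zero_or_pos s with hs0 | hs0
  · exact chunk t c w (by omega)
  · set r := (t + 1) - s with hr
    have hrle : r ≤ t := by omega
    have hex : w.length + r = (c+1) * (t+1) := by
      have : (c+1)*(t+1) = c*(t+1)+(t+1) := by ring
      omega
    rcases le_or_gt (r * lf t) w.length with hge | hlt
    · exact star_long t r hrle w ⟨c+1, hex⟩ hge
    · exfalso
      have hdvd1 : (t+1) ∣ r * (lf t + 1) := by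
        refine ⟨r * (2^t + 1), ?_⟩
        rw [lf]; ring
      have hdvd2 : (t+1) ∣ w.length + r := ⟨c+1, by rw [Nat.mul_comm]; omega⟩
      have hDpos : 0 < r * lf t - w.length := by omega
      have hDeq : r * lf t - w.length = r * (lf t + 1) - (w.length + r) := by
        have : r * (lf t + 1) = r * lf t + r := by ring
        omega
      have hdvdD : (t+1) ∣ r * lf t - w.length := by
        rw [hDeq]; exact Nat.dvd_sub hdvd1 hdvd2
      have hDge : t + 1 ≤ r * lf t - w.length := Nat.le_of_dvd hDpos hdvdD
      have hrlf : r * lf t ≤ t * lf t := Nat.mul_le_mul_right _ hrle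
      omega


lemma prefix_piece {a x w : List (Fin 2)} (h : a ++ x <+: w) :
    (w.drop a.length).take x.length = x := by
  obtain ⟨s, hs⟩ := h
  rw [← hs, List.append_assoc, List.drop_left' rfl, List.take_left' rfl]

lemma Wnotin (t : ℕ) (ht : 2 ≤ t) : Wf t ∉ (Sf t)∗ := by
  have hNf : Nf t + (t+1) = t * lf t := by
    have h1 : t + 1 ≤ t * lf t := by
      have : t * (t+1) ≤ t * lf t := Nat.mul_le_mul_left _ (by rw [lf]; nlinarith [Nat.one_le_two_pow (n := t)])
      nlinarith
    rw [Nf]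
    omega
  have hC : 2^t * (t+1) + t = lf t := by rw [lf]; ring
  intro hmem
  rw [Language.mem_kstar] at hmem
  obtain ⟨L, hWL, hL⟩ := hmem
  have key : ∀ M : List (List (Fin 2)), (∀ y ∈ M, y ∈ Sf t) → M.flatten <+: Wf t →
      ∃ i j, i ≤ t ∧ M.flatten.length = i * lf t + j * (t+1) := by
    intro M
    induction M using List.reverseRecOn with
    | nil => intro _ _; exact ⟨0, 0, by omega, by simp⟩
    | append_singleton M' x ih =>
      intro hall hpre
      have hflat : (M' ++ [x]).flatten = M'.flatten ++ x := by
        rw [List.flatten_append]; simp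
      rw [hflat] at hpre ⊢
      have hpre' : M'.flatten <+: Wf t := (List.prefix_append _ _).trans hpre
      obtain ⟨i, j, hi, hlen⟩ := ih (fun y hy => hall y (List.mem_append_left _ hy)) hpre'
      have hx : x ∈ Sf t := hall x (List.mem_append_right _ (List.mem_singleton_self _))
      rcases hx with hx | hx
      · refine ⟨i, j + 1, hi, ?_⟩
        rw [List.length_append, hlen, hx]
        ring
      · -- x ∈ Bf t
        have hxlen : x.length = 2*t+1 := hx.1
        set p := M'.flatten.length with hp
        have hptot : p + (2*t+1) ≤ Nf t := by
          have := hpre.length_le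
          rw [List.length_append, hxlen, Wf_length] at this
          omega
        have hslice : ((Wf t).drop p).take (2*t+1) = x := by
          have := prefix_piece hpre
          rw [hxlen] at this
          exact this
        have hilt : i < t := by
          by_contra hge
          push_neg at hge
          have : t * lf t ≤ i * lf t := Nat.mul_le_mul_right _ hge
          omega
        rw [hlen] at hslice
        have hjlt : ¬ (j + 1 < 2^t) := by
          intro hjlt
          refine design t i j hilt hjlt (by omega) ?_
          rw [hslice]
          exact hx
        push_neg at hjlt
        refine ⟨i + 1, j + 1 - 2^t, by omega, ?_⟩
        rw [List.length_append, hxlen, ← hp, hlen]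
        have e1 : (i+1) * lf t = i * lf t + lf t := by ring
        have e2 : (j + 1 - 2^t) * (t+1) = (j+1) * (t+1) - 2^t * (t+1) := Nat.sub_mul _ _ _
        have e3 : (j+1) * (t+1) = j * (t+1) + (t+1) := by ring
        have e4 : 2^t * (t+1) ≤ (j+1) * (t+1) := Nat.mul_le_mul_right _ hjlt
        omega
  obtain ⟨i, j, hi, hlen⟩ := key L hL (by rw [← hWL])
  rw [← hWL, Wf_length] at hlen
  -- Nf t = i * lf t + j * (t+1) is impossible
  have hd : (t - i) * lf t = (j + 1) * (t+1) := by
    have e1 : (t - i) * lf t = t * lf t - i * lf t := Nat.sub_mul _ _ _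
    have e2 : (j+1) * (t+1) = j * (t+1) + (t+1) := by ring
    have e3 : i * lf t ≤ t * lf t := Nat.mul_le_mul_right _ hi
    omega
  have hdvd1 : (t+1) ∣ (t - i) * (lf t + 1) := ⟨(t - i) * (2^t + 1), by rw [lf]; ring⟩
  have hdvd2 : (t+1) ∣ (t - i) * lf t := ⟨j + 1, by rw [hd]; ring⟩
  have hdvd : (t+1) ∣ (t - i) := by
    have heq : (t - i) = (t - i) * (lf t + 1) - (t - i) * lf t := by
      have : (t - i) * (lf t + 1) = (t - i) * lf t + (t - i) := by ring
      omega
    rw [heq]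
    exact Nat.dvd_sub hdvd1 hdvd2
  have hdi : t - i = 0 := by
    rcases Nat.eq_zero_or_pos (t - i) with h | h
    · exact h
    · exfalso
      have := Nat.le_of_dvd h hdvd
      omega
  rw [hdi, Nat.zero_mul] at hd
  exact absurd hd.symm (Nat.mul_ne_zero (by omega) (by omega))

end Frob14

/-- For each odd `n ≥ 5` there is a finite set `S` of binary words of length
at most `n` such that `S∗` is co-finite and the longest word not in `S∗` has length
`m·l − m − l`, where `m = (n+1)/2` and `l = m·2^{n−m} + (n−m)` (which is `Ω(n²·2^{n/2})`). -/
theorem longest_omitted_lower_bound_binary (n : ℕ) (h5 : 5 ≤ n) (hodd : Odd n)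
    (m l : ℕ) (hm : m = (n + 1) / 2) (hl : l = m * 2 ^ (n - m) + (n - m)) :
    ∃ S : Language (Fin 2), S.Finite ∧ (∀ w ∈ S, w.length ≤ n) ∧
      Set.Finite ((S∗ : Language (Fin 2))ᶜ) ∧
      IsGreatest {len : ℕ | ∃ w : List (Fin 2), w ∉ S∗ ∧ w.length = len}
        (m * l - m - l) := by
  obtain ⟨k, hk⟩ := hodd
  have hmk : m = k + 1 := by omega
  have hnm : n - m = k := by omega
  have h2k : 2 ≤ k := by omega
  have hlfk : l = Frob14.lf k := by
    rw [hl, hnm, hmk, Frob14.lf]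
  have hN : m * l - m - l = Frob14.Nf k := by
    have e : m * l = k * l + l := by rw [hmk]; ring
    have e2 : Frob14.Nf k = k * l - (k+1) := by rw [Frob14.Nf, ← hlfk]
    omega
  refine ⟨Frob14.Sf k, ?_, ?_, ?_, ?_⟩
  · apply (List.finite_length_le (Fin 2) n).subset
    rintro w (hw | hw)
    · simp only [Set.mem_setOf_eq]; omega
    · simp only [Set.mem_setOf_eq]
      rw [hw.1]; omega
  · rintro w (hw | hw)
    · omega
    · rw [hw.1]; omega
  · apply (List.finite_length_le (Fin 2) (Frob14.Nf k)).subset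
    intro w hw
    change w ∉ (Frob14.Sf k)∗ at hw
    simp only [Set.mem_setOf_eq]
    by_contra hlen
    push_neg at hlen
    exact hw (Frob14.upper k h2k w hlen)
  · rw [hN]
    constructor
    · exact ⟨Frob14.Wf k, Frob14.Wnotin k h2k, Frob14.Wf_length k⟩
    · rintro len ⟨w, hw, rfl⟩
      by_contra hgt
      push_neg at hgt
      exact hw (Frob14.upper k h2k w hgt)
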